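/- (Fourier mass on low-dimensional irreps from large U² norm) Let G be a finite group and f : G → U_t with ‖f‖_{U²}⁴ ≥ η·t for some η > 0. Then for any integer D > 1, max over irreducible representations ρ of G with d_ρ < D of ‖f̂(ρ)‖²_HS is at least η − t/D. In particular, taking D = ⌈2t/η⌉, there exists an irrep ρ with d_ρ < 2t/η and ‖f̂(ρ)‖²_HS ≥ η/2. -/

import Mathlib

open scoped Kronecker ComplexOrder
open Finset Matrix

attribute [local instance] Classical.propDecidable

noncomputable section

def hsNormSq {m n : Type*} [Fintype m] [Fintype n] (A : Matrix m n ℂ) : ℝ :=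
  ∑ i, ∑ j, Complex.normSq (A i j)

def vnorm {n : ℕ} (u : Fin n → ℂ) : ℝ := Real.sqrt (∑ i, Complex.normSq (u i))

def opNorm {d : ℕ} (M : Matrix (Fin d) (Fin d) ℂ) : ℝ :=
  ‖Matrix.toEuclideanCLM (𝕜 := ℂ) M‖

def traceNorm {m : Type*} [Fintype m] [DecidableEq m] (A : Matrix m m ℂ) : ℝ :=
  ((Matrix.posSemidef_conjTranspose_mul_self A).1.eigenvectorUnitary.1 *
    diagonal (((↑) : ℝ → ℂ) ∘ Real.sqrt ∘ (Matrix.posSemidef_conjTranspose_mul_self A).1.eigenvalues) *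
    (star (Matrix.posSemidef_conjTranspose_mul_self A).1.eigenvectorUnitary : Matrix m m ℂ)).trace.re

variable {G : Type*} [Group G] [Fintype G]

def conv {t : ℕ} (f g : G → Matrix (Fin t) (Fin t) ℂ) (x : G) : Matrix (Fin t) (Fin t) ℂ :=
  (Fintype.card G : ℂ)⁻¹ • ∑ y, f (x * y⁻¹) * g y

def adjFun {t : ℕ} (f : G → Matrix (Fin t) (Fin t) ℂ) (x : G) : Matrix (Fin t) (Fin t) ℂ :=
  (f x⁻¹)ᴴ

def fourierMat {t d : ℕ} (f : G → Matrix (Fin t) (Fin t) ℂ)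
    (ρ : G →* Matrix.unitaryGroup (Fin d) ℂ) : Matrix (Fin t × Fin d) (Fin t × Fin d) ℂ :=
  (Fintype.card G : ℂ)⁻¹ • ∑ x, (f x) ⊗ₖ (ρ x : Matrix (Fin d) (Fin d) ℂ)

def l2sq {t : ℕ} (f : G → Matrix (Fin t) (Fin t) ℂ) : ℝ :=
  (Fintype.card G : ℝ)⁻¹ * ∑ x, hsNormSq (f x)

def u2pow4 {t : ℕ} (f : G → Matrix (Fin t) (Fin t) ℂ) : ℝ := l2sq (conv (adjFun f) f)

def IsIrred {d : ℕ} (ρ : G →* Matrix.unitaryGroup (Fin d) ℂ) : Prop :=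
  ∀ M : Matrix (Fin d) (Fin d) ℂ,
    (∀ g, (ρ g : Matrix (Fin d) (Fin d) ℂ) * M = M * (ρ g : Matrix (Fin d) (Fin d) ℂ)) →
    ∃ c : ℂ, M = c • (1 : Matrix (Fin d) (Fin d) ℂ)

def IsNontrivialRep {d : ℕ} (ρ : G →* Matrix.unitaryGroup (Fin d) ℂ) : Prop :=
  ∃ g, (ρ g : Matrix (Fin d) (Fin d) ℂ) ≠ 1

def IsBiased (S : Finset G) (ε : ℝ) : Prop :=
  S.Nonempty ∧ ∀ (d : ℕ) (ρ : G →* Matrix.unitaryGroup (Fin d) ℂ),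
    IsIrred ρ → IsNontrivialRep ρ →
    opNorm ((S.card : ℂ)⁻¹ • ∑ s ∈ S, (ρ s : Matrix (Fin d) (Fin d) ℂ)) ≤ ε

def Tmat (f : G → ℂ) : Matrix G G ℂ := fun x y => f (x⁻¹ * y) / (Fintype.card G : ℂ)

set_option linter.unusedSectionVars false
set_option maxHeartbeats 1000000

namespace FMLDaux

lemma ofReal_hsNormSq {m n : Type*} [Fintype m] [Fintype n] (A : Matrix m n ℂ) :
    (hsNormSq A : ℂ) = (Aᴴ * A).trace := by
  classical
  simp only [hsNormSq, Matrix.trace, Matrix.diag_apply, Matrix.mul_apply,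
    Matrix.conjTranspose_apply]
  push_cast
  rw [Finset.sum_comm]
  refine Finset.sum_congr rfl fun i _ => Finset.sum_congr rfl fun j _ => ?_
  rw [Complex.normSq_eq_conj_mul_self]; rfl

lemma hsNormSq_nonneg {m n : Type*} [Fintype m] [Fintype n] (A : Matrix m n ℂ) :
    0 ≤ hsNormSq A :=
  Finset.sum_nonneg fun _ _ => Finset.sum_nonneg fun _ _ => Complex.normSq_nonneg _

lemma hsNormSq_conjTranspose_mul_self_le {m n : Type*} [Fintype m] [Fintype n]
    (A : Matrix m n ℂ) : hsNormSq (Aᴴ * A) ≤ (hsNormSq A) ^ 2 := by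
  classical
  have key : ∀ j k : n, Complex.normSq ((Aᴴ * A) j k)
      ≤ (∑ i, Complex.normSq (A i j)) * (∑ i, Complex.normSq (A i k)) := by
    intro j k
    have h1 : ‖(Aᴴ * A) j k‖ ≤ ∑ i, ‖A i j‖ * ‖A i k‖ := by
      rw [Matrix.mul_apply]
      refine (norm_sum_le _ _).trans (le_of_eq ?_)
      refine Finset.sum_congr rfl fun i _ => ?_
      rw [Matrix.conjTranspose_apply]
      simp [_root_.map_mul, Complex.norm_conj]
    have h2 : (∑ i, ‖A i j‖ * ‖A i k‖) ^ 2
        ≤ (∑ i, ‖A i j‖ ^ 2) * (∑ i, ‖A i k‖ ^ 2) :=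
      Finset.sum_mul_sq_le_sq_mul_sq _ _ _
    calc Complex.normSq ((Aᴴ * A) j k) = ‖(Aᴴ * A) j k‖ ^ 2 := (Complex.sq_norm _).symm
      _ ≤ (∑ i, ‖A i j‖ * ‖A i k‖) ^ 2 := by
          apply pow_le_pow_left₀ (norm_nonneg _) h1
      _ ≤ (∑ i, ‖A i j‖ ^ 2) * (∑ i, ‖A i k‖ ^ 2) := h2
      _ = (∑ i, Complex.normSq (A i j)) * (∑ i, Complex.normSq (A i k)) := by
          simp [Complex.sq_norm]
  calc hsNormSq (Aᴴ * A) = ∑ j, ∑ k, Complex.normSq ((Aᴴ * A) j k) := rfl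
    _ ≤ ∑ j, ∑ k, (∑ i, Complex.normSq (A i j)) * (∑ i, Complex.normSq (A i k)) := by
        refine Finset.sum_le_sum fun j _ => Finset.sum_le_sum fun k _ => key j k
    _ = (∑ j : n, ∑ i, Complex.normSq (A i j)) ^ 2 := by
        rw [sq, Finset.sum_mul_sum]
    _ = (hsNormSq A) ^ 2 := by rw [hsNormSq, Finset.sum_comm]

lemma sum_kronecker {l m p q ι : Type*} [Fintype l] [Fintype m] [Fintype p] [Fintype q]
    (s : Finset ι) (A : ι → Matrix l m ℂ) (B : Matrix p q ℂ) :
    (∑ i ∈ s, A i) ⊗ₖ B = ∑ i ∈ s, (A i) ⊗ₖ B := by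
  ext ⟨a, b⟩ ⟨c, e⟩
  simp [Matrix.kroneckerMap_apply, Matrix.sum_apply, Finset.sum_mul]

lemma kronecker_conjTranspose {l m p q : Type*} [Fintype l] [Fintype m] [Fintype p] [Fintype q]
    (A : Matrix l m ℂ) (B : Matrix p q ℂ) : (A ⊗ₖ B)ᴴ = Aᴴ ⊗ₖ Bᴴ := by
  ext ⟨a, b⟩ ⟨c, e⟩
  simp [Matrix.kroneckerMap_apply, Matrix.conjTranspose_apply]

end FMLDaux

namespace FMLDaux2

variable {G : Type*} [Group G] [Fintype G]

lemma coe_mul {d : ℕ} (ρ : G →* Matrix.unitaryGroup (Fin d) ℂ) (x y : G) :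
    (ρ (x * y) : Matrix (Fin d) (Fin d) ℂ)
      = (ρ x : Matrix (Fin d) (Fin d) ℂ) * (ρ y : Matrix (Fin d) (Fin d) ℂ) := by
  rw [_root_.map_mul]; rfl

lemma coe_inv {d : ℕ} (ρ : G →* Matrix.unitaryGroup (Fin d) ℂ) (x : G) :
    (ρ x⁻¹ : Matrix (Fin d) (Fin d) ℂ) = (ρ x : Matrix (Fin d) (Fin d) ℂ)ᴴ := by
  rw [map_inv, Matrix.UnitaryGroup.inv_val, Matrix.star_eq_conjTranspose]

lemma coe_one {d : ℕ} (ρ : G →* Matrix.unitaryGroup (Fin d) ℂ) :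
    (ρ 1 : Matrix (Fin d) (Fin d) ℂ) = 1 := by
  rw [_root_.map_one]; rfl

lemma ct_mul_self {d : ℕ} (ρ : G →* Matrix.unitaryGroup (Fin d) ℂ) (x : G) :
    (ρ x : Matrix (Fin d) (Fin d) ℂ)ᴴ * (ρ x : Matrix (Fin d) (Fin d) ℂ) = 1 := by
  rw [← Matrix.star_eq_conjTranspose]
  exact Matrix.UnitaryGroup.star_mul_self _

def avg {d₁ d₂ : ℕ} (ρ₁ : G →* Matrix.unitaryGroup (Fin d₁) ℂ)
    (ρ₂ : G →* Matrix.unitaryGroup (Fin d₂) ℂ) (E : Matrix (Fin d₁) (Fin d₂) ℂ) :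
    Matrix (Fin d₁) (Fin d₂) ℂ :=
  ∑ x : G, (ρ₁ x : Matrix (Fin d₁) (Fin d₁) ℂ) * E * (ρ₂ x : Matrix (Fin d₂) (Fin d₂) ℂ)ᴴ

lemma avg_intertwine {d₁ d₂ : ℕ} (ρ₁ : G →* Matrix.unitaryGroup (Fin d₁) ℂ)
    (ρ₂ : G →* Matrix.unitaryGroup (Fin d₂) ℂ) (E : Matrix (Fin d₁) (Fin d₂) ℂ) (g : G) :
    (ρ₁ g : Matrix (Fin d₁) (Fin d₁) ℂ) * avg ρ₁ ρ₂ E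
      = avg ρ₁ ρ₂ E * (ρ₂ g : Matrix (Fin d₂) (Fin d₂) ℂ) := by
  unfold avg
  rw [Matrix.mul_sum, Matrix.sum_mul]
  set F : G → Matrix (Fin d₁) (Fin d₂) ℂ :=
    fun y => (ρ₁ y : Matrix (Fin d₁) (Fin d₁) ℂ) * E * (ρ₂ (g⁻¹ * y) : Matrix (Fin d₂) (Fin d₂) ℂ)ᴴ
    with hF
  have step1 : ∀ x : G,
      (ρ₁ g : Matrix (Fin d₁) (Fin d₁) ℂ)
        * ((ρ₁ x : Matrix (Fin d₁) (Fin d₁) ℂ) * E * (ρ₂ x : Matrix (Fin d₂) (Fin d₂) ℂ)ᴴ)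
      = F ((Equiv.mulLeft g) x) := by
    intro x
    simp only [hF, Equiv.coe_mulLeft, inv_mul_cancel_left, coe_mul]
    have h2 : (ρ₂ g⁻¹ : Matrix (Fin d₂) (Fin d₂) ℂ)
        * ((ρ₂ g : Matrix (Fin d₂) (Fin d₂) ℂ) * (ρ₂ x : Matrix (Fin d₂) (Fin d₂) ℂ))
        = (ρ₂ x : Matrix (Fin d₂) (Fin d₂) ℂ) := by
      rw [← Matrix.mul_assoc, ← coe_mul ρ₂ g⁻¹ g, inv_mul_cancel, coe_one, Matrix.one_mul]
    rw [h2]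
    simp only [Matrix.mul_assoc]
  have step2 : ∀ y : G, F y
      = (ρ₁ y : Matrix (Fin d₁) (Fin d₁) ℂ) * E * (ρ₂ y : Matrix (Fin d₂) (Fin d₂) ℂ)ᴴ
        * (ρ₂ g : Matrix (Fin d₂) (Fin d₂) ℂ) := by
    intro y
    simp only [hF]
    rw [show g⁻¹ * y = g⁻¹ * y from rfl, coe_mul, Matrix.conjTranspose_mul, coe_inv,
      Matrix.conjTranspose_conjTranspose]
    simp only [Matrix.mul_assoc]
  calc ∑ x : G, (ρ₁ g : Matrix (Fin d₁) (Fin d₁) ℂ)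
        * ((ρ₁ x : Matrix (Fin d₁) (Fin d₁) ℂ) * E * (ρ₂ x : Matrix (Fin d₂) (Fin d₂) ℂ)ᴴ)
      = ∑ x : G, F ((Equiv.mulLeft g) x) := Finset.sum_congr rfl fun x _ => step1 x
    _ = ∑ y : G, F y := Equiv.sum_comp (Equiv.mulLeft g) F
    _ = ∑ y : G, (ρ₁ y : Matrix (Fin d₁) (Fin d₁) ℂ) * E
          * (ρ₂ y : Matrix (Fin d₂) (Fin d₂) ℂ)ᴴ * (ρ₂ g : Matrix (Fin d₂) (Fin d₂) ℂ) :=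
        Finset.sum_congr rfl fun y _ => step2 y

lemma avg_trace {d₁ : ℕ} (ρ₁ : G →* Matrix.unitaryGroup (Fin d₁) ℂ)
    (E : Matrix (Fin d₁) (Fin d₁) ℂ) :
    (avg ρ₁ ρ₁ E).trace = (Fintype.card G : ℂ) * E.trace := by
  unfold avg
  rw [Matrix.trace_sum]
  have : ∀ x : G, ((ρ₁ x : Matrix (Fin d₁) (Fin d₁) ℂ) * E
      * (ρ₁ x : Matrix (Fin d₁) (Fin d₁) ℂ)ᴴ).trace = E.trace := by
    intro x
    rw [Matrix.trace_mul_cycle, ct_mul_self, Matrix.one_mul]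
  simp [this, Finset.sum_const, Finset.card_univ]

lemma entry_formula {d₁ d₂ : ℕ} (M : Matrix (Fin d₁) (Fin d₁) ℂ) (N : Matrix (Fin d₂) (Fin d₂) ℂ)
    (b : Fin d₁) (e : Fin d₁) (c : Fin d₂) (e' : Fin d₂) :
    (M * Matrix.single e e' (1 : ℂ) * Nᴴ) b c = M b e * star (N c e') := by
  classical
  rw [Matrix.mul_apply]
  have : ∀ l, (M * Matrix.single e e' (1 : ℂ)) b l * Nᴴ l c
      = (if l = e' then M b e * star (N c e') else 0) := by
    intro l
    rw [Matrix.mul_apply, Matrix.conjTranspose_apply]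
    by_cases hl : l = e'
    · subst hl
      rw [if_pos rfl]
      rw [Finset.sum_eq_single e]
      · simp [Matrix.single]
      · intro k _ hk
        simp only [Matrix.single, Matrix.of_apply]
        rw [if_neg (by tauto), mul_zero]
      · simp
    · rw [if_neg hl]
      have : ∀ k, M b k * Matrix.single e e' (1 : ℂ) k l = 0 := by
        intro k
        simp only [Matrix.single, Matrix.of_apply]
        rw [if_neg (by tauto), mul_zero]
      simp [this]
  rw [Finset.sum_congr rfl fun l _ => this l]
  simp

section Ortho

variable {I : Type*} [Fintype I] (d : I → ℕ) (ρ : ∀ i, G →* Matrix.unitaryGroup (Fin (d i)) ℂ)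

def Umat : Matrix (Σ i : I, Fin (d i) × Fin (d i)) G ℂ :=
  fun s x => (ρ s.1 x : Matrix (Fin (d s.1)) (Fin (d s.1)) ℂ) s.2.1 s.2.2

def Vmat : Matrix G (Σ i : I, Fin (d i) × Fin (d i)) ℂ :=
  fun x s => ((d s.1 : ℂ) / (Fintype.card G : ℂ))
    * star ((ρ s.1 x : Matrix (Fin (d s.1)) (Fin (d s.1)) ℂ) s.2.1 s.2.2)

variable (hpos : ∀ i, 0 < d i)
  (hirr : ∀ i, ∀ M : Matrix (Fin (d i)) (Fin (d i)) ℂ,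
    (∀ g, (ρ i g : Matrix (Fin (d i)) (Fin (d i)) ℂ) * M = M * (ρ i g : Matrix (Fin (d i)) (Fin (d i)) ℂ)) →
    ∃ c : ℂ, M = c • (1 : Matrix (Fin (d i)) (Fin (d i)) ℂ))
  (hdisj : ∀ i j, i ≠ j → ∀ M : Matrix (Fin (d i)) (Fin (d j)) ℂ,
    (∀ g, (ρ i g : Matrix (Fin (d i)) (Fin (d i)) ℂ) * M
        = M * (ρ j g : Matrix (Fin (d j)) (Fin (d j)) ℂ)) → M = 0)

include hpos hirr in
lemma avg_self (i : I) (E : Matrix (Fin (d i)) (Fin (d i)) ℂ) :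
    avg (ρ i) (ρ i) E = (((Fintype.card G : ℂ) * E.trace) / (d i : ℂ)) • 1 := by
  obtain ⟨c, hc⟩ := hirr i (avg (ρ i) (ρ i) E) (fun g => avg_intertwine (ρ i) (ρ i) E g)
  have htr := avg_trace (ρ i) E
  rw [hc] at htr ⊢
  rw [Matrix.trace_smul, Matrix.trace_one] at htr
  have hd : (d i : ℂ) ≠ 0 := Nat.cast_ne_zero.mpr (hpos i).ne'
  have hcard : ((Fintype.card (Fin (d i)) : ℕ) : ℂ) = (d i : ℂ) := by simp
  rw [smul_eq_mul, hcard] at htr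
  have hc2 : c = (Fintype.card G : ℂ) * E.trace / (d i : ℂ) := by
    rw [eq_div_iff hd]; exact htr
  rw [hc2]

include hdisj in
lemma avg_cross {i j : I} (hij : i ≠ j) (E : Matrix (Fin (d i)) (Fin (d j)) ℂ) :
    avg (ρ i) (ρ j) E = 0 :=
  hdisj i j hij _ (fun g => avg_intertwine (ρ i) (ρ j) E g)

lemma sum_entry_eq_avg {i j : I} (b e : Fin (d i)) (c e' : Fin (d j)) :
    ∑ x : G, (ρ i x : Matrix (Fin (d i)) (Fin (d i)) ℂ) b e
        * star ((ρ j x : Matrix (Fin (d j)) (Fin (d j)) ℂ) c e')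
      = avg (ρ i) (ρ j) (Matrix.single e e' (1 : ℂ)) b c := by
  unfold avg
  rw [Matrix.sum_apply]
  exact Finset.sum_congr rfl fun x _ => (entry_formula _ _ b e c e').symm

include hpos hirr hdisj in
lemma UV : Umat d ρ * Vmat d ρ = 1 := by
  classical
  have hG : (Fintype.card G : ℂ) ≠ 0 := Nat.cast_ne_zero.mpr Fintype.card_ne_zero
  ext ⟨i, b, e⟩ ⟨j, c, e'⟩
  rw [Matrix.mul_apply]
  have hsum : ∑ x : G, Umat d ρ ⟨i, b, e⟩ x * Vmat d ρ x ⟨j, c, e'⟩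
      = ((d j : ℂ) / (Fintype.card G : ℂ))
        * avg (ρ i) (ρ j) (Matrix.single e e' (1 : ℂ)) b c := by
    rw [← sum_entry_eq_avg, Finset.mul_sum]
    refine Finset.sum_congr rfl fun x _ => ?_
    unfold Umat Vmat
    ring
  rw [hsum]
  by_cases hij : i = j
  · subst hij
    rw [avg_self d ρ hpos hirr i]
    have htr : (Matrix.single e e' (1 : ℂ)).trace = if e = e' then 1 else 0 := by
      by_cases he : e = e'
      · subst he
        rw [if_pos rfl, Matrix.trace, Matrix.diag_single_same]
        simp
      · rw [if_neg he, Matrix.trace]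
        have hz := Matrix.diag_single_of_ne (i := e) (j := e') (c := (1 : ℂ)) he
        have : ∀ x : Fin (d i), Matrix.single e e' (1 : ℂ) x x = 0 := by
          intro x; exact congrFun hz x
        exact Finset.sum_eq_zero fun x _ => congrFun hz x
    have hd : (d i : ℂ) ≠ 0 := Nat.cast_ne_zero.mpr (hpos i).ne'
    rw [htr, Matrix.smul_apply, Matrix.one_apply, Matrix.one_apply, smul_eq_mul]
    by_cases hbc : b = c <;> by_cases hee : e = e'
    · subst hbc; subst hee
      rw [if_pos rfl, if_pos rfl, if_pos rfl]
      field_simp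
    · subst hbc
      rw [if_pos rfl, if_neg hee, if_neg (by simp [Sigma.ext_iff, Prod.ext_iff, hee])]
      ring
    · subst hee
      rw [if_neg hbc, if_pos rfl, if_neg (by simp [Sigma.ext_iff, Prod.ext_iff, hbc])]
      ring
    · rw [if_neg hbc, if_neg hee, if_neg (by simp [Sigma.ext_iff, Prod.ext_iff, hbc])]
      ring
  · rw [avg_cross d ρ hdisj hij, Matrix.zero_apply, mul_zero]
    rw [Matrix.one_apply_ne]
    intro h
    exact hij (congrArg Sigma.fst h)


include hpos hirr hdisj in
lemma VU (hcomplete : ∑ i, (d i) ^ 2 = Fintype.card G) :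
    Vmat d ρ * Umat d ρ = 1 := by
  classical
  have hcard : Fintype.card (Σ i : I, Fin (d i) × Fin (d i)) = Fintype.card G := by
    rw [Fintype.card_sigma, ← hcomplete]
    refine Finset.sum_congr rfl fun i _ => ?_
    simp [sq]
  let e : (Σ i : I, Fin (d i) × Fin (d i)) ≃ G := Fintype.equivOfCardEq hcard
  have hAB : (Umat d ρ).submatrix ⇑e.symm ⇑(Equiv.refl G)
      * (Vmat d ρ).submatrix ⇑(Equiv.refl G) ⇑e.symm = 1 := by
    rw [Matrix.submatrix_mul_equiv (Umat d ρ) (Vmat d ρ) ⇑e.symm (Equiv.refl G) ⇑e.symm]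
    rw [UV d ρ hpos hirr hdisj]
    exact Matrix.submatrix_one_equiv e.symm
  have hBA := mul_eq_one_comm.mp hAB
  have hVU : (Vmat d ρ).submatrix ⇑(Equiv.refl G) ⇑e.symm
      * (Umat d ρ).submatrix ⇑e.symm ⇑(Equiv.refl G)
      = (Vmat d ρ * Umat d ρ).submatrix ⇑(Equiv.refl G) ⇑(Equiv.refl G) :=
    Matrix.submatrix_mul_equiv (Vmat d ρ) (Umat d ρ) _ e.symm _
  rw [hVU] at hBA
  rw [← hBA]
  simp [Equiv.coe_refl, Matrix.submatrix_id_id]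

include hpos hirr hdisj in
lemma key (hcomplete : ∑ i, (d i) ^ 2 = Fintype.card G) (x y : G) :
    ∑ i, (d i : ℂ) * ((ρ i x : Matrix (Fin (d i)) (Fin (d i)) ℂ)ᴴ
        * (ρ i y : Matrix (Fin (d i)) (Fin (d i)) ℂ)).trace
      = if x = y then (Fintype.card G : ℂ) else 0 := by
  classical
  have hG : (Fintype.card G : ℂ) ≠ 0 := Nat.cast_ne_zero.mpr Fintype.card_ne_zero
  have h1 : (Vmat d ρ * Umat d ρ) x y = (1 : Matrix G G ℂ) x y := by
    rw [VU d ρ hpos hirr hdisj hcomplete]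
  have h2 : ∑ i, (d i : ℂ) * ((ρ i x : Matrix (Fin (d i)) (Fin (d i)) ℂ)ᴴ
        * (ρ i y : Matrix (Fin (d i)) (Fin (d i)) ℂ)).trace
      = (Fintype.card G : ℂ) * (Vmat d ρ * Umat d ρ) x y := by
    rw [Matrix.mul_apply, ← Finset.univ_sigma_univ, Finset.sum_sigma, Finset.mul_sum]
    refine Finset.sum_congr rfl fun i _ => ?_
    rw [Fintype.sum_prod_type]
    have htr : ((ρ i x : Matrix (Fin (d i)) (Fin (d i)) ℂ)ᴴ
        * (ρ i y : Matrix (Fin (d i)) (Fin (d i)) ℂ)).trace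
        = ∑ k, ∑ m, star ((ρ i x : Matrix (Fin (d i)) (Fin (d i)) ℂ) m k)
            * (ρ i y : Matrix (Fin (d i)) (Fin (d i)) ℂ) m k := by
      rw [Matrix.trace]
      refine Finset.sum_congr rfl fun k _ => ?_
      rw [Matrix.diag_apply, Matrix.mul_apply]
      refine Finset.sum_congr rfl fun m _ => ?_
      rw [Matrix.conjTranspose_apply]
    rw [htr, Finset.sum_comm]
    unfold Vmat Umat
    simp only
    rw [Finset.mul_sum, Finset.mul_sum]
    refine Finset.sum_congr rfl fun b _ => ?_
    rw [Finset.mul_sum, Finset.mul_sum]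
    refine Finset.sum_congr rfl fun k _ => ?_
    field_simp
  rw [h2, h1, Matrix.one_apply]
  by_cases hxy : x = y
  · rw [if_pos hxy, if_pos hxy, mul_one]
  · rw [if_neg hxy, if_neg hxy, mul_zero]

include hpos hirr hdisj in
lemma parseval (hcomplete : ∑ i, (d i) ^ 2 = Fintype.card G) (t : ℕ)
    (F : G → Matrix (Fin t) (Fin t) ℂ) :
    ∑ i, (d i : ℂ) * ((fourierMat F (ρ i))ᴴ * fourierMat F (ρ i)).trace
      = (Fintype.card G : ℂ)⁻¹ * ∑ x, ((F x)ᴴ * F x).trace := by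
  classical
  have hG : (Fintype.card G : ℂ) ≠ 0 := Nat.cast_ne_zero.mpr Fintype.card_ne_zero
  set c : ℂ := (Fintype.card G : ℂ)⁻¹ with hc
  set T : G → G → ℂ := fun x y => ((F x)ᴴ * F y).trace with hT
  set R : I → G → G → ℂ := fun i x y => ((ρ i x : Matrix (Fin (d i)) (Fin (d i)) ℂ)ᴴ
      * (ρ i y : Matrix (Fin (d i)) (Fin (d i)) ℂ)).trace with hR
  have expand : ∀ i, ((fourierMat F (ρ i))ᴴ * fourierMat F (ρ i)).trace
      = c * c * ∑ x, ∑ y, T x y * R i x y := by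
    intro i
    unfold fourierMat
    rw [Matrix.conjTranspose_smul, Matrix.conjTranspose_sum]
    rw [Matrix.smul_mul, Matrix.mul_smul, smul_smul, Matrix.trace_smul]
    have hstar : star ((Fintype.card G : ℂ)⁻¹) = (Fintype.card G : ℂ)⁻¹ := by
      rw [star_inv₀]
      simp
    rw [hstar]
    rw [Finset.sum_mul_sum]
    rw [Matrix.trace_sum]
    have hterm : ∀ x y : G, (((F x) ⊗ₖ (ρ i x : Matrix (Fin (d i)) (Fin (d i)) ℂ))ᴴ
        * ((F y) ⊗ₖ (ρ i y : Matrix (Fin (d i)) (Fin (d i)) ℂ))).trace = T x y * R i x y := by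
      intro x y
      rw [FMLDaux.kronecker_conjTranspose, ← Matrix.mul_kronecker_mul, Matrix.trace_kronecker]
    have : ∀ x : G, (∑ y, (((F x) ⊗ₖ (ρ i x : Matrix (Fin (d i)) (Fin (d i)) ℂ))ᴴ
        * ((F y) ⊗ₖ (ρ i y : Matrix (Fin (d i)) (Fin (d i)) ℂ))).trace)
        = ∑ y, T x y * R i x y := by
      intro x
      exact Finset.sum_congr rfl fun y _ => hterm x y
    rw [smul_eq_mul]
    congr 1
    refine Finset.sum_congr rfl fun x _ => ?_
    rw [Matrix.trace_sum]
    exact this x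
  calc ∑ i, (d i : ℂ) * ((fourierMat F (ρ i))ᴴ * fourierMat F (ρ i)).trace
      = ∑ i, ∑ x, ∑ y, c * c * (d i : ℂ) * (T x y * R i x y) := by
        refine Finset.sum_congr rfl fun i _ => ?_
        rw [expand i]
        simp_rw [Finset.mul_sum]
        refine Finset.sum_congr rfl fun x _ => Finset.sum_congr rfl fun y _ => ?_
        ring
    _ = ∑ x, ∑ y, c * c * T x y * ∑ i, (d i : ℂ) * R i x y := by
        rw [Finset.sum_comm]
        refine Finset.sum_congr rfl fun x _ => ?_
        rw [Finset.sum_comm]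
        refine Finset.sum_congr rfl fun y _ => ?_
        rw [Finset.mul_sum]
        refine Finset.sum_congr rfl fun i _ => ?_
        ring
    _ = ∑ x, ∑ y, c * c * T x y * (if x = y then (Fintype.card G : ℂ) else 0) := by
        refine Finset.sum_congr rfl fun x _ => Finset.sum_congr rfl fun y _ => ?_
        rw [hR]
        rw [key d ρ hpos hirr hdisj hcomplete x y]
    _ = ∑ x, c * c * T x x * (Fintype.card G : ℂ) := by
        refine Finset.sum_congr rfl fun x _ => ?_
        rw [Finset.sum_eq_single x]
        · rw [if_pos rfl]
        · intro y _ hy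
          rw [if_neg (fun h => hy h.symm), mul_zero]
        · intro h; exact absurd (Finset.mem_univ x) h
    _ = c * ∑ x, T x x := by
        rw [Finset.mul_sum]
        refine Finset.sum_congr rfl fun x _ => ?_
        rw [hc]
        field_simp

omit hpos hirr hdisj

lemma fourier_conv (t : ℕ) (f : G → Matrix (Fin t) (Fin t) ℂ) {dd : ℕ}
    (ρ₀ : G →* Matrix.unitaryGroup (Fin dd) ℂ) :
    fourierMat (conv (adjFun f) f) ρ₀ = (fourierMat f ρ₀)ᴴ * fourierMat f ρ₀ := by
  classical
  set c : ℂ := (Fintype.card G : ℂ)⁻¹ with hc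
  set Sf : Matrix (Fin t × Fin dd) (Fin t × Fin dd) ℂ :=
    ∑ x, (f x) ⊗ₖ (ρ₀ x : Matrix (Fin dd) (Fin dd) ℂ) with hSf
  have hA : ∑ x, (adjFun f x) ⊗ₖ (ρ₀ x : Matrix (Fin dd) (Fin dd) ℂ) = Sfᴴ := by
    rw [hSf, Matrix.conjTranspose_sum]
    rw [← Equiv.sum_comp (Equiv.inv G) (fun x => (adjFun f x) ⊗ₖ (ρ₀ x : Matrix (Fin dd) (Fin dd) ℂ))]
    refine Finset.sum_congr rfl fun x _ => ?_
    have h1 : adjFun f ((Equiv.inv G) x) = (f x)ᴴ := by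
      unfold adjFun
      simp
    rw [h1]
    have h2 : (ρ₀ ((Equiv.inv G) x) : Matrix (Fin dd) (Fin dd) ℂ)
        = (ρ₀ x : Matrix (Fin dd) (Fin dd) ℂ)ᴴ := by
      simp only [Equiv.inv_apply]
      exact coe_inv ρ₀ x
    rw [h2, FMLDaux.kronecker_conjTranspose]
  have hMain : ∑ x, (conv (adjFun f) f x) ⊗ₖ (ρ₀ x : Matrix (Fin dd) (Fin dd) ℂ)
      = c • (Sfᴴ * Sf) := by
    have hterm : ∀ x : G, (conv (adjFun f) f x) ⊗ₖ (ρ₀ x : Matrix (Fin dd) (Fin dd) ℂ)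
        = c • ∑ y, ((adjFun f (x * y⁻¹)) ⊗ₖ (ρ₀ (x * y⁻¹) : Matrix (Fin dd) (Fin dd) ℂ))
            * ((f y) ⊗ₖ (ρ₀ y : Matrix (Fin dd) (Fin dd) ℂ)) := by
      intro x
      unfold conv
      rw [Matrix.smul_kronecker, FMLDaux.sum_kronecker]
      rw [hc]
      congr 1
      refine Finset.sum_congr rfl fun y _ => ?_
      have : (ρ₀ x : Matrix (Fin dd) (Fin dd) ℂ)
          = (ρ₀ (x * y⁻¹) : Matrix (Fin dd) (Fin dd) ℂ)
            * (ρ₀ y : Matrix (Fin dd) (Fin dd) ℂ) := by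
        rw [← coe_mul]
        congr 1
        group
      rw [this, Matrix.mul_kronecker_mul]
    rw [Finset.sum_congr rfl fun x _ => hterm x]
    rw [← Finset.smul_sum]
    congr 1
    rw [Finset.sum_comm]
    have hinner : ∀ y : G, ∑ x, ((adjFun f (x * y⁻¹)) ⊗ₖ (ρ₀ (x * y⁻¹) : Matrix (Fin dd) (Fin dd) ℂ))
          * ((f y) ⊗ₖ (ρ₀ y : Matrix (Fin dd) (Fin dd) ℂ))
        = Sfᴴ * ((f y) ⊗ₖ (ρ₀ y : Matrix (Fin dd) (Fin dd) ℂ)) := by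
      intro y
      rw [← hA, Finset.sum_mul]
      exact Equiv.sum_comp (Equiv.mulRight y⁻¹)
        (fun z => ((adjFun f z) ⊗ₖ (ρ₀ z : Matrix (Fin dd) (Fin dd) ℂ))
          * ((f y) ⊗ₖ (ρ₀ y : Matrix (Fin dd) (Fin dd) ℂ)))
    rw [Finset.sum_congr rfl fun y _ => hinner y]
    rw [← Matrix.mul_sum]
  unfold fourierMat
  rw [hMain]
  rw [Matrix.conjTranspose_smul, Matrix.smul_mul, Matrix.mul_smul, smul_smul, smul_smul]
  have hstar : star ((Fintype.card G : ℂ)⁻¹) = (Fintype.card G : ℂ)⁻¹ := by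
    rw [star_inv₀]; simp
  rw [hstar]

include hpos hirr hdisj in
lemma exists_trivial (hcomplete : ∑ i, (d i) ^ 2 = Fintype.card G) : ∃ i0, d i0 = 1 := by
  classical
  have hG : (Fintype.card G : ℂ) ≠ 0 := Nat.cast_ne_zero.mpr Fintype.card_ne_zero
  have hsum : ∑ i, (d i : ℂ) * (∑ y, (ρ i y : Matrix (Fin (d i)) (Fin (d i)) ℂ)).trace
      = (Fintype.card G : ℂ) := by
    have h1 : ∑ y : G, ∑ i, (d i : ℂ) * ((ρ i 1 : Matrix (Fin (d i)) (Fin (d i)) ℂ)ᴴ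
        * (ρ i y : Matrix (Fin (d i)) (Fin (d i)) ℂ)).trace = (Fintype.card G : ℂ) := by
      rw [Finset.sum_congr rfl fun y _ => key d ρ hpos hirr hdisj hcomplete 1 y]
      rw [Finset.sum_ite_eq]
      simp
    rw [Finset.sum_comm] at h1
    rw [← h1]
    refine Finset.sum_congr rfl fun i _ => ?_
    rw [Matrix.trace_sum, Finset.mul_sum]
    refine Finset.sum_congr rfl fun y _ => ?_
    rw [coe_one, Matrix.conjTranspose_one, Matrix.one_mul]
  have hex : ∃ i, (∑ y, (ρ i y : Matrix (Fin (d i)) (Fin (d i)) ℂ)).trace ≠ 0 := by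
    by_contra h
    push_neg at h
    rw [Finset.sum_congr rfl fun i _ => by rw [h i, mul_zero]] at hsum
    rw [Finset.sum_const, smul_zero] at hsum
    exact hG hsum.symm
  obtain ⟨i0, hi0⟩ := hex
  set σ : Matrix (Fin (d i0)) (Fin (d i0)) ℂ :=
    ∑ y, (ρ i0 y : Matrix (Fin (d i0)) (Fin (d i0)) ℂ) with hσ
  have hcomm : ∀ g, (ρ i0 g : Matrix (Fin (d i0)) (Fin (d i0)) ℂ) * σ
      = σ * (ρ i0 g : Matrix (Fin (d i0)) (Fin (d i0)) ℂ) := by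
    intro g
    have hL : (ρ i0 g : Matrix (Fin (d i0)) (Fin (d i0)) ℂ) * σ = σ := by
      rw [hσ, Matrix.mul_sum]
      rw [Finset.sum_congr rfl fun y _ => (coe_mul (ρ i0) g y).symm]
      exact Equiv.sum_comp (Equiv.mulLeft g) (fun y => (ρ i0 y : Matrix (Fin (d i0)) (Fin (d i0)) ℂ))
    have hRR : σ * (ρ i0 g : Matrix (Fin (d i0)) (Fin (d i0)) ℂ) = σ := by
      rw [hσ, Matrix.sum_mul]
      rw [Finset.sum_congr rfl fun y _ => (coe_mul (ρ i0) y g).symm]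
      exact Equiv.sum_comp (Equiv.mulRight g) (fun y => (ρ i0 y : Matrix (Fin (d i0)) (Fin (d i0)) ℂ))
    rw [hL, hRR]
  obtain ⟨cc, hcc⟩ := hirr i0 σ hcomm
  have hcc0 : cc ≠ 0 := by
    intro h
    rw [h, zero_smul] at hcc
    rw [hcc, Matrix.trace_zero] at hi0
    exact hi0 rfl
  have htriv : ∀ g, (ρ i0 g : Matrix (Fin (d i0)) (Fin (d i0)) ℂ) = 1 := by
    intro g
    have hL : (ρ i0 g : Matrix (Fin (d i0)) (Fin (d i0)) ℂ) * σ = σ := by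
      rw [hσ, Matrix.mul_sum]
      rw [Finset.sum_congr rfl fun y _ => (coe_mul (ρ i0) g y).symm]
      exact Equiv.sum_comp (Equiv.mulLeft g) (fun y => (ρ i0 y : Matrix (Fin (d i0)) (Fin (d i0)) ℂ))
    rw [hcc] at hL
    rw [Matrix.mul_smul, Matrix.mul_one] at hL
    exact smul_right_injective (Matrix (Fin (d i0)) (Fin (d i0)) ℂ) hcc0 hL
  refine ⟨i0, ?_⟩
  by_contra hd1
  have h2 : 1 < d i0 := by
    have := hpos i0
    omega
  obtain ⟨a, b, hab⟩ := Fintype.exists_pair_of_one_lt_card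
    (α := Fin (d i0)) (by rw [Fintype.card_fin]; exact h2)
  have hM : ∀ g : G, (ρ i0 g : Matrix (Fin (d i0)) (Fin (d i0)) ℂ)
      * Matrix.single a b (1 : ℂ)
      = Matrix.single a b (1 : ℂ) * (ρ i0 g : Matrix (Fin (d i0)) (Fin (d i0)) ℂ) := by
    intro g
    rw [htriv g, Matrix.one_mul, Matrix.mul_one]
  obtain ⟨c2, hc2⟩ := hirr i0 _ hM
  have hent := congrFun (congrFun hc2 a) b
  rw [Matrix.smul_apply, Matrix.one_apply_ne hab, smul_zero] at hent
  rw [Matrix.single_apply_same] at hent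
  exact one_ne_zero hent


end Ortho

end FMLDaux2

theorem fourier_mass_low_dim {G : Type*} [Group G] [Fintype G] {t : ℕ} (ht : 0 < t)
    {I : Type*} [Fintype I] (d : I → ℕ) (ρ : ∀ i, G →* Matrix.unitaryGroup (Fin (d i)) ℂ)
    (hpos : ∀ i, 0 < d i) (hirr : ∀ i, IsIrred (ρ i))
    (hdisj : ∀ i j, i ≠ j → ∀ M : Matrix (Fin (d i)) (Fin (d j)) ℂ,
      (∀ g, (ρ i g : Matrix (Fin (d i)) (Fin (d i)) ℂ) * M
          = M * (ρ j g : Matrix (Fin (d j)) (Fin (d j)) ℂ)) → M = 0)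
    (hcomplete : ∑ i, (d i) ^ 2 = Fintype.card G)
    (f : G → Matrix (Fin t) (Fin t) ℂ)
    (hf : ∀ x, f x ∈ Matrix.unitaryGroup (Fin t) ℂ)
    (η : ℝ) (hη : 0 < η) (hU2 : η * t ≤ u2pow4 f) :
    (∀ D : ℕ, 1 < D → ∃ i, d i < D ∧
        η - (t : ℝ) / D ≤ hsNormSq (fourierMat f (ρ i))) ∧
    (∃ i, (d i : ℝ) < 2 * t / η ∧ η / 2 ≤ hsNormSq (fourierMat f (ρ i))) := by
  classical
  have ht' : (0:ℝ) < t := by exact_mod_cast ht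
  set S : I → ℝ := fun i => hsNormSq (fourierMat f (ρ i)) with hSdef
  set P : I → ℝ := fun i => hsNormSq ((fourierMat f (ρ i))ᴴ * fourierMat f (ρ i)) with hPdef
  have hS0 : ∀ i, 0 ≤ S i := fun i => FMLDaux.hsNormSq_nonneg _
  have hPS : ∀ i, P i ≤ S i ^ 2 := fun i => FMLDaux.hsNormSq_conjTranspose_mul_self_le _
  have hfu : ∀ x, (f x)ᴴ * f x = 1 := by
    intro x
    have h1 : f x * star (f x) = 1 := Matrix.mem_unitaryGroup_iff.mp (hf x)
    have h2 := mul_eq_one_comm.mp h1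
    rwa [Matrix.star_eq_conjTranspose] at h2
  have hparf : ∑ i, (d i : ℝ) * S i = (t : ℝ) := by
    have hC := FMLDaux2.parseval d ρ hpos hirr hdisj hcomplete t f
    have hL : ∑ i, (d i:ℂ) * ((fourierMat f (ρ i))ᴴ * fourierMat f (ρ i)).trace
        = ((∑ i, (d i:ℝ) * S i : ℝ) : ℂ) := by
      push_cast
      refine Finset.sum_congr rfl fun i _ => ?_
      rw [hSdef]
      rw [FMLDaux.ofReal_hsNormSq]
    have hR : (Fintype.card G : ℂ)⁻¹ * ∑ x, ((f x)ᴴ * f x).trace = ((t:ℝ) : ℂ) := by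
      rw [Finset.sum_congr rfl fun x _ => by rw [hfu x]]
      rw [Finset.sum_const, Matrix.trace_one, Finset.card_univ]
      have hG : (Fintype.card G : ℂ) ≠ 0 := Nat.cast_ne_zero.mpr Fintype.card_ne_zero
      push_cast
      field_simp
      simp [nsmul_eq_mul]
    rw [hL, hR] at hC
    exact_mod_cast hC
  have hparc : ∑ i, (d i : ℝ) * P i = u2pow4 f := by
    have hC := FMLDaux2.parseval d ρ hpos hirr hdisj hcomplete t (conv (adjFun f) f)
    have hL : ∑ i, (d i:ℂ) * ((fourierMat (conv (adjFun f) f) (ρ i))ᴴ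
          * fourierMat (conv (adjFun f) f) (ρ i)).trace
        = ((∑ i, (d i:ℝ) * P i : ℝ) : ℂ) := by
      push_cast
      refine Finset.sum_congr rfl fun i _ => ?_
      rw [FMLDaux2.fourier_conv t f (ρ i), hPdef]
      rw [FMLDaux.ofReal_hsNormSq]
    have hR : (Fintype.card G : ℂ)⁻¹ * ∑ x, ((conv (adjFun f) f x)ᴴ * conv (adjFun f) f x).trace
        = ((u2pow4 f : ℝ) : ℂ) := by
      rw [show u2pow4 f = l2sq (conv (adjFun f) f) from rfl, l2sq]
      rw [Finset.sum_congr rfl fun x _ => (FMLDaux.ofReal_hsNormSq (conv (adjFun f) f x)).symm]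
      push_cast
      ring
    rw [hL, hR] at hC
    exact_mod_cast hC
  obtain ⟨i0, hi0⟩ := FMLDaux2.exists_trivial d ρ hpos hirr hdisj hcomplete
  have hdS_le : ∀ i, (d i : ℝ) * S i ≤ (t:ℝ) := by
    intro i
    rw [← hparf]
    refine Finset.single_le_sum (f := fun i => (d i:ℝ) * S i) (fun j _ => ?_) (Finset.mem_univ i)
    exact mul_nonneg (Nat.cast_nonneg _) (hS0 j)
  have hU2' : η * t ≤ ∑ i, (d i : ℝ) * P i := by rw [hparc]; exact hU2
  have part1 : ∀ D : ℕ, 1 < D → ∃ i, d i < D ∧ η - (t : ℝ) / D ≤ S i := by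
    intro D hD
    have hD0 : (0:ℝ) < D := by
      have : (0:ℕ) < D := by omega
      exact_mod_cast this
    have htD0 : 0 ≤ (t:ℝ)/D := by positivity
    set T := Finset.univ.filter (fun i => d i < D) with hT
    have hi0T : i0 ∈ T := Finset.mem_filter.mpr ⟨Finset.mem_univ _, by omega⟩
    obtain ⟨j, hjT, hjmax⟩ := T.exists_max_image S ⟨i0, hi0T⟩
    have hjD : d j < D := (Finset.mem_filter.mp hjT).2
    have hSj : 0 ≤ S j := hS0 j
    refine ⟨j, hjD, ?_⟩
    have hsplit : ∑ i ∈ T, ((d i:ℝ) * P i)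
        + ∑ i ∈ Finset.univ.filter (fun i => ¬ d i < D), ((d i:ℝ) * P i)
        = ∑ i, (d i:ℝ) * P i :=
      Finset.sum_filter_add_sum_filter_not Finset.univ _ _
    have h1 : ∑ i ∈ T, (d i:ℝ) * P i ≤ t * S j := by
      have e1 : ∀ i ∈ T, (d i:ℝ) * P i ≤ ((d i:ℝ) * S i) * S j := by
        intro i hiT
        have hps : P i ≤ S i * S j := by
          calc P i ≤ S i ^ 2 := hPS i
            _ = S i * S i := sq (S i)
            _ ≤ S i * S j := mul_le_mul_of_nonneg_left (hjmax i hiT) (hS0 i)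
        calc (d i:ℝ) * P i ≤ (d i:ℝ) * (S i * S j) :=
              mul_le_mul_of_nonneg_left hps (Nat.cast_nonneg _)
          _ = ((d i:ℝ) * S i) * S j := by ring
      calc ∑ i ∈ T, (d i:ℝ) * P i ≤ ∑ i ∈ T, ((d i:ℝ) * S i) * S j := Finset.sum_le_sum e1
        _ = (∑ i ∈ T, (d i:ℝ) * S i) * S j := (Finset.sum_mul _ _ _).symm
        _ ≤ (∑ i, (d i:ℝ) * S i) * S j := by
            refine mul_le_mul_of_nonneg_right ?_ hSj
            exact Finset.sum_le_sum_of_subset_of_nonneg (Finset.subset_univ T)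
              (fun i _ _ => mul_nonneg (Nat.cast_nonneg _) (hS0 i))
        _ = t * S j := by rw [hparf]
    have h2 : ∑ i ∈ Finset.univ.filter (fun i => ¬ d i < D), (d i:ℝ) * P i
        ≤ t * ((t:ℝ)/D) := by
      have e2 : ∀ i ∈ Finset.univ.filter (fun i => ¬ d i < D),
          (d i:ℝ) * P i ≤ ((d i:ℝ) * S i) * ((t:ℝ)/D) := by
        intro i hi
        have hDd : (D:ℝ) ≤ (d i:ℝ) := by
          have := (Finset.mem_filter.mp hi).2
          exact_mod_cast Nat.le_of_not_lt this
        have hdpos : (0:ℝ) < (d i:ℝ) := by exact_mod_cast hpos i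
        have hSiD : S i ≤ (t:ℝ)/D := by
          have hdi : S i ≤ (t:ℝ) / (d i:ℝ) := by
            rw [le_div_iff₀ hdpos, mul_comm]
            exact hdS_le i
          refine hdi.trans ?_
          exact div_le_div_of_nonneg_left (le_of_lt ht') hD0 hDd
        have hps : P i ≤ S i * ((t:ℝ)/D) := by
          calc P i ≤ S i ^ 2 := hPS i
            _ = S i * S i := sq (S i)
            _ ≤ S i * ((t:ℝ)/D) := mul_le_mul_of_nonneg_left hSiD (hS0 i)
        calc (d i:ℝ) * P i ≤ (d i:ℝ) * (S i * ((t:ℝ)/D)) :=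
              mul_le_mul_of_nonneg_left hps (Nat.cast_nonneg _)
          _ = ((d i:ℝ) * S i) * ((t:ℝ)/D) := by ring
      calc ∑ i ∈ Finset.univ.filter (fun i => ¬ d i < D), (d i:ℝ) * P i
          ≤ ∑ i ∈ Finset.univ.filter (fun i => ¬ d i < D), ((d i:ℝ) * S i) * ((t:ℝ)/D) :=
            Finset.sum_le_sum e2
        _ = (∑ i ∈ Finset.univ.filter (fun i => ¬ d i < D), (d i:ℝ) * S i) * ((t:ℝ)/D) :=
            (Finset.sum_mul _ _ _).symm
        _ ≤ (∑ i, (d i:ℝ) * S i) * ((t:ℝ)/D) := by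
            refine mul_le_mul_of_nonneg_right ?_ htD0
            exact Finset.sum_le_sum_of_subset_of_nonneg (Finset.subset_univ _)
              (fun i _ _ => mul_nonneg (Nat.cast_nonneg _) (hS0 i))
        _ = t * ((t:ℝ)/D) := by rw [hparf]
    have hcomb : η * t ≤ t * S j + t * ((t:ℝ)/D) := by
      calc η * t ≤ ∑ i, (d i:ℝ) * P i := hU2'
        _ = _ + _ := hsplit.symm
        _ ≤ t * S j + t * ((t:ℝ)/D) := add_le_add h1 h2
    have hfin : η ≤ S j + (t:ℝ)/D := by
      have h3 : η * t ≤ (S j + (t:ℝ)/D) * t := by nlinarith [hcomb]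
      exact le_of_mul_le_mul_right h3 ht'
    linarith
  have hSt : ∀ i, S i ≤ (t:ℝ) := by
    intro i
    have h1 : (1:ℝ) ≤ (d i:ℝ) := by exact_mod_cast hpos i
    nlinarith [hdS_le i, hS0 i]
  have hηt : η ≤ (t:ℝ) := by
    have hb : ∑ i, (d i:ℝ) * P i ≤ (t:ℝ) * t := by
      calc ∑ i, (d i:ℝ) * P i ≤ ∑ i, ((d i:ℝ) * S i) * (t:ℝ) := by
            refine Finset.sum_le_sum fun i _ => ?_
            have hps : P i ≤ S i * (t:ℝ) := by
              calc P i ≤ S i ^ 2 := hPS i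
                _ = S i * S i := sq (S i)
                _ ≤ S i * (t:ℝ) := mul_le_mul_of_nonneg_left (hSt i) (hS0 i)
            calc (d i:ℝ) * P i ≤ (d i:ℝ) * (S i * (t:ℝ)) :=
                  mul_le_mul_of_nonneg_left hps (Nat.cast_nonneg _)
              _ = ((d i:ℝ) * S i) * (t:ℝ) := by ring
        _ = (∑ i, (d i:ℝ) * S i) * (t:ℝ) := (Finset.sum_mul _ _ _).symm
        _ = (t:ℝ) * t := by rw [hparf]
    have := hU2'.trans hb
    exact le_of_mul_le_mul_right this ht'
  refine ⟨part1, ?_⟩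
  set D : ℕ := ⌈2 * (t:ℝ) / η⌉₊ with hDdef
  have hratio0 : 0 ≤ 2 * (t:ℝ) / η := by positivity
  have h2t : (2:ℝ) ≤ 2 * (t:ℝ) / η := by
    rw [le_div_iff₀ hη]
    nlinarith [hηt]
  have hDR : 2 * (t:ℝ)/η ≤ (D:ℝ) := Nat.le_ceil _
  have hD2 : 2 ≤ D := by
    have h2D : (2:ℝ) ≤ (D:ℝ) := le_trans h2t hDR
    exact_mod_cast h2D
  obtain ⟨i, hiD, hiS⟩ := part1 D (by omega)
  have hDlt : (D:ℝ) < 2*(t:ℝ)/η + 1 := Nat.ceil_lt_add_one hratio0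
  refine ⟨i, ?_, ?_⟩
  · have hle : (d i:ℝ) ≤ (D:ℝ) - 1 := by
      have h4 : d i + 1 ≤ D := hiD
      have h5 : ((d i + 1 : ℕ):ℝ) ≤ (D:ℝ) := by exact_mod_cast h4
      push_cast at h5
      linarith
    linarith
  · have hDpos : (0:ℝ) < (D:ℝ) := by
      have : (0:ℕ) < D := by omega
      exact_mod_cast this
    have htD : (t:ℝ)/D ≤ η/2 := by
      rw [div_le_iff₀ hDpos]
      have hmul := mul_le_mul_of_nonneg_left hDR (le_of_lt (half_pos hη))
      have heq : (η/2) * (2*(t:ℝ)/η) = (t:ℝ) := by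
        field_simp
      calc (t:ℝ) = (η/2) * (2*(t:ℝ)/η) := heq.symm
        _ ≤ (η/2) * (D:ℝ) := hmul
        _ = η/2 * (D:ℝ) := rfl
    linarith [hiS]
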